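/- arXiv:2503.22823 — 7 statements merged into one kernel-verified Lean document; each statement's English description precedes it below -/
import Mathlib

section
/- For classical channels W₁ and W₂ on finite alphabets, the Doeblin coefficient is multiplicative under tensor products: α(W₁ ⊗ W₂) = α(W₁)·α(W₂), where (W₁⊗W₂)((y₁,y₂)|(x₁,x₂)) = W₁(y₁|x₁)W₂(y₂|x₂). -/
lemma ciInf_mul_ciInf {A B : Type} [Fintype A] [Fintype B] [Nonempty A] [Nonempty B]
    (f : A → ℝ) (g : B → ℝ) (hf : ∀ a, 0 ≤ f a) (hg : ∀ b, 0 ≤ g b) :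
    ⨅ p : A × B, f p.1 * g p.2 = (⨅ a, f a) * ⨅ b, g b := by
  obtain ⟨a₀, ha₀⟩ := Finite.exists_min f
  obtain ⟨b₀, hb₀⟩ := Finite.exists_min g
  have hfa : (⨅ a, f a) = f a₀ :=
    le_antisymm (ciInf_le (Set.finite_range f).bddBelow a₀) (le_ciInf ha₀)
  have hgb : (⨅ b, g b) = g b₀ :=
    le_antisymm (ciInf_le (Set.finite_range g).bddBelow b₀) (le_ciInf hb₀)
  apply le_antisymm
  · calc ⨅ p : A × B, f p.1 * g p.2 ≤ f a₀ * g b₀ :=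
          ciInf_le (Set.finite_range _).bddBelow (a₀, b₀)
      _ = (⨅ a, f a) * ⨅ b, g b := by rw [hfa, hgb]
  · refine le_ciInf fun p => ?_
    rw [hfa, hgb]
    exact mul_le_mul (ha₀ p.1) (hb₀ p.2) (hg b₀) (hf p.1)

/-- Multiplicativity of the classical Doeblin coefficient under tensor products,
using the minimum-likelihood formula `α(W) = Σ_y min_x p(y|x)`. -/
theorem stmt2 {X₁ Y₁ X₂ Y₂ : Type} [Fintype X₁] [Fintype Y₁] [Fintype X₂] [Fintype Y₂]
    [Nonempty X₁] [Nonempty X₂]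
    (p₁ : X₁ → Y₁ → ℝ) (p₂ : X₂ → Y₂ → ℝ)
    (h₁ : ∀ x y, 0 ≤ p₁ x y) (h₂ : ∀ x y, 0 ≤ p₂ x y)
    (hs₁ : ∀ x, ∑ y, p₁ x y = 1) (hs₂ : ∀ x, ∑ y, p₂ x y = 1) :
    ∑ y : Y₁ × Y₂, ⨅ x : X₁ × X₂, p₁ x.1 y.1 * p₂ x.2 y.2
      = (∑ y₁, ⨅ x₁, p₁ x₁ y₁) * (∑ y₂, ⨅ x₂, p₂ x₂ y₂) := by
  rw [Finset.sum_mul_sum]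
  rw [← Finset.sum_product']
  rw [Finset.univ_product_univ]
  exact Finset.sum_congr rfl fun y _ =>
    ciInf_mul_ciInf (fun x₁ => p₁ x₁ y.1) (fun x₂ => p₂ x₂ y.2)
      (fun x₁ => h₁ x₁ y.1) (fun x₂ => h₂ x₂ y.2)
end

section
/- If a quantum channel N can be written N = λ R_τ + (1−λ) M with λ ∈ [0,1], τ a trace-one Hermitian operator, R_τ(ρ) = Tr(ρ)τ, and M a CPTP map, then for all states ρ_{RA}, σ_{RA} with equal marginals ρ_R = σ_R, ‖(id_R ⊗ N)(ρ_{RA}) − (id_R ⊗ N)(σ_{RA})‖₁ ≤ (1−λ)·‖ρ_{RA} − σ_{RA}‖₁. -/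
open Matrix
open scoped ComplexOrder

/-- Partial trace over the second tensor factor (here: the marginal on `R`). -/
noncomputable def traceOutSnd {A B : Type} [Fintype B] (M : Matrix (A × B) (A × B) ℂ) :
    Matrix A A ℂ :=
  Matrix.of fun i j => ∑ b, M (i, b) (j, b)

/-- The replacer map `ρ ↦ Tr(ρ) • τ`. -/
noncomputable def replacer (A : Type) [Fintype A] {B : Type} (τ : Matrix B B ℂ) :
    Matrix A A ℂ →ₗ[ℂ] Matrix B B ℂ :=
  (Matrix.traceLinearMap A ℂ ℂ).smulRight τ

/-- The action of `id_R ⊗ Φ` on matrices over `R × A`. -/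
noncomputable def tensorId {R A B : Type} (Φ : Matrix A A ℂ →ₗ[ℂ] Matrix B B ℂ)
    (ρ : Matrix (R × A) (R × A) ℂ) : Matrix (R × B) (R × B) ℂ :=
  Matrix.of fun p q => Φ (Matrix.of fun a a' => ρ (p.1, a) (q.1, a')) p.2 q.2

/-- Completely positive and trace preserving. -/
noncomputable def IsCPTP {A B : Type} [Fintype A] [Fintype B]
    (Φ : Matrix A A ℂ →ₗ[ℂ] Matrix B B ℂ) : Prop :=
  (∀ (k : ℕ) (ρ : Matrix (Fin k × A) (Fin k × A) ℂ), ρ.PosSemidef →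
      (tensorId (R := Fin k) Φ ρ).PosSemidef) ∧
  ∀ ρ : Matrix A A ℂ, (Φ ρ).trace = ρ.trace

/-- Square root of a positive semidefinite matrix, as `Matrix.PosSemidef.sqrt` was defined in the older Mathlib. -/
noncomputable def Matrix.PosSemidef.sqrt {n 𝕜 : Type*} [Fintype n] [RCLike 𝕜] [DecidableEq n]
    {A : Matrix n n 𝕜} (hA : A.PosSemidef) : Matrix n n 𝕜 :=
  hA.1.eigenvectorUnitary.1 * diagonal ((↑) ∘ (√·) ∘ hA.1.eigenvalues) *
    (star hA.1.eigenvectorUnitary : Matrix n n 𝕜)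

/-- The trace norm `‖M‖₁ = Tr √(MᴴM)`. -/
noncomputable def traceNorm {n : Type} [Fintype n] [DecidableEq n] (M : Matrix n n ℂ) : ℝ :=
  ((Matrix.posSemidef_conjTranspose_mul_self M).sqrt).trace.re

/-! ### Auxiliary lemmas -/

section
open scoped MatrixOrder
lemma Matrix.PosSemidef.sqrt_eq_cfcSqrt {n : Type} [Fintype n] [DecidableEq n]
    {A : Matrix n n ℂ} (hA : A.PosSemidef) : hA.sqrt = CFC.sqrt A := by
  rw [CFC.sqrt_eq_real_sqrt A hA.nonneg, cfcₙ_eq_cfc, hA.1.cfc_eq]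
  rfl
lemma Matrix.PosSemidef.posSemidef_sqrt {n : Type} [Fintype n] [DecidableEq n]
    {A : Matrix n n ℂ} (hA : A.PosSemidef) : hA.sqrt.PosSemidef := by
  rw [hA.sqrt_eq_cfcSqrt]
  exact (CFC.sqrt_nonneg A).posSemidef
lemma Matrix.PosSemidef.sq_sqrt {n : Type} [Fintype n] [DecidableEq n]
    {A : Matrix n n ℂ} (hA : A.PosSemidef) : hA.sqrt ^ 2 = A := by
  rw [hA.sqrt_eq_cfcSqrt]
  exact CFC.sq_sqrt A hA.nonneg
lemma Matrix.PosSemidef.eq_sqrt_of_sq_eq {n : Type} [Fintype n] [DecidableEq n]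
    {B : Matrix n n ℂ} (hB : B.PosSemidef) {A : Matrix n n ℂ} (hA : A.PosSemidef)
    (h : B ^ 2 = A) : B = hA.sqrt := by
  rw [hA.sqrt_eq_cfcSqrt]
  exact (CFC.sqrt_unique (by rw [← pow_two]; exact h) hB.nonneg).symm
end

lemma traceNorm_hermitian {n : Type} [Fintype n] [DecidableEq n] {Y : Matrix n n ℂ}
    (hY : Y.IsHermitian) : traceNorm Y = ∑ i, |hY.eigenvalues i| := by
  set U : Matrix n n ℂ := (hY.eigenvectorUnitary : Matrix n n ℂ) with hU
  have hUU : star U * U = 1 := Unitary.coe_star_mul_self hY.eigenvectorUnitary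
  have key : ∀ d e : n → ℂ, (U * diagonal d * star U) * (U * diagonal e * star U)
      = U * diagonal (fun i => d i * e i) * star U := by
    intro d e
    simp only [Matrix.mul_assoc]
    rw [← Matrix.mul_assoc (star U) U, hUU, Matrix.one_mul]
    rw [← Matrix.mul_assoc (diagonal d) (diagonal e), diagonal_mul_diagonal]
  set S : Matrix n n ℂ := U * diagonal (fun i => ((|hY.eigenvalues i| : ℝ) : ℂ)) * star U with hSdef
  have hdiag : (diagonal (fun i => ((|hY.eigenvalues i| : ℝ) : ℂ))).PosSemidef :=
    PosSemidef.diagonal fun i => by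
      simpa using Complex.zero_le_real.mpr (abs_nonneg (hY.eigenvalues i))
  have hS : S.PosSemidef := by
    exact hdiag.mul_mul_conjTranspose_same U
  have hfun : (fun i => ((|hY.eigenvalues i| : ℝ) : ℂ) * ((|hY.eigenvalues i| : ℝ) : ℂ))
      = fun i => (RCLike.ofReal ∘ hY.eigenvalues) i * (RCLike.ofReal ∘ hY.eigenvalues) i := by
    funext i
    show ((|hY.eigenvalues i| : ℝ) : ℂ) * ((|hY.eigenvalues i| : ℝ) : ℂ)
      = ((hY.eigenvalues i : ℝ) : ℂ) * ((hY.eigenvalues i : ℝ) : ℂ)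
    rw [← Complex.ofReal_mul, ← Complex.ofReal_mul, abs_mul_abs_self]
  have hsq : S ^ 2 = Yᴴ * Y := by
    rw [hY.eq]
    conv_rhs => rw [hY.spectral_theorem, Unitary.conjStarAlgAut_apply]
    rw [hSdef, pow_two, key, key, hfun]
  have hSeq : S = (Matrix.posSemidef_conjTranspose_mul_self Y).sqrt :=
    hS.eq_sqrt_of_sq_eq _ hsq
  rw [traceNorm, ← hSeq, hSdef, Matrix.trace_mul_cycle, hUU, Matrix.one_mul,
    Matrix.trace_diagonal]
  simp

lemma traceNorm_real_smul {n : Type} [Fintype n] [DecidableEq n] {c : ℝ} (hc : 0 ≤ c)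
    (X : Matrix n n ℂ) : traceNorm ((c : ℂ) • X) = c * traceNorm X := by
  set S := (Matrix.posSemidef_conjTranspose_mul_self X).sqrt with hSdef
  have hS : S.PosSemidef := (Matrix.posSemidef_conjTranspose_mul_self X).posSemidef_sqrt
  have hcS : ((c : ℂ) • S).PosSemidef := by
    constructor
    · rw [IsHermitian, conjTranspose_smul, hS.1.eq]
      simp [Complex.conj_ofReal]
    · intro x
      exact (hS.smul (a := (c : ℂ)) (by rw [Complex.zero_le_real]; exact hc)).2 x
  have hsq : ((c : ℂ) • S) ^ 2 = ((c : ℂ) • X)ᴴ * ((c : ℂ) • X) := by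
    rw [smul_pow, hSdef, (Matrix.posSemidef_conjTranspose_mul_self X).sq_sqrt,
      conjTranspose_smul, Matrix.smul_mul, Matrix.mul_smul, smul_smul,
      Complex.star_def, Complex.conj_ofReal, pow_two]
  have hSeq : (c : ℂ) • S = (Matrix.posSemidef_conjTranspose_mul_self ((c : ℂ) • X)).sqrt :=
    hcS.eq_sqrt_of_sq_eq _ hsq
  rw [traceNorm, ← hSeq, trace_smul, traceNorm, ← hSdef]
  simp [Complex.smul_re]

lemma sum_dotProduct_eigenvectorBasis {n : Type} [Fintype n] [DecidableEq n]
    {Y : Matrix n n ℂ} (hY : Y.IsHermitian) (P : Matrix n n ℂ) :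
    ∑ i, dotProduct (star ⇑(hY.eigenvectorBasis i)) (P *ᵥ ⇑(hY.eigenvectorBasis i))
      = P.trace := by
  set U : Matrix n n ℂ := (hY.eigenvectorUnitary : Matrix n n ℂ) with hU
  have hUU : U * star U = 1 := Unitary.coe_mul_star_self hY.eigenvectorUnitary
  have h1 : ∀ i, dotProduct (star ⇑(hY.eigenvectorBasis i)) (P *ᵥ ⇑(hY.eigenvectorBasis i))
      = (star U * P * U) i i := by
    intro i
    simp only [dotProduct, mulVec, dotProduct, Matrix.mul_apply, conjTranspose_apply,
      Pi.star_apply, star_apply, Finset.mul_sum, Finset.sum_mul, hU,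
      hY.eigenvectorUnitary_apply]
    rw [Finset.sum_comm]
    refine Finset.sum_congr rfl fun a _ => Finset.sum_congr rfl fun b _ => ?_
    ring
  rw [Finset.sum_congr rfl fun i _ => h1 i]
  have h2 : (star U * P * U).trace = P.trace := by
    rw [Matrix.trace_mul_cycle, hUU, Matrix.one_mul]
  rw [← h2, Matrix.trace]
  rfl

/-- If `Y = P - Q` with `P, Q` PSD then `‖Y‖₁ ≤ Re (Tr P + Tr Q)`. -/
lemma traceNorm_psd_sub_le {n : Type} [Fintype n] [DecidableEq n] {P Q : Matrix n n ℂ}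
    (hP : P.PosSemidef) (hQ : Q.PosSemidef) :
    traceNorm (P - Q) ≤ (P.trace + Q.trace).re := by
  have hY : (P - Q).IsHermitian := hP.1.sub hQ.1
  rw [traceNorm_hermitian hY]
  set v : n → (n → ℂ) := fun i => ⇑(hY.eigenvectorBasis i) with hv
  set p : n → ℝ := fun i => (dotProduct (star (v i)) (P *ᵥ v i)).re with hp
  set q : n → ℝ := fun i => (dotProduct (star (v i)) (Q *ᵥ v i)).re with hq
  have hpn : ∀ i, 0 ≤ p i := fun i => hP.re_dotProduct_nonneg (v i)
  have hqn : ∀ i, 0 ≤ q i := fun i => hQ.re_dotProduct_nonneg (v i)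
  have heig : ∀ i, hY.eigenvalues i = p i - q i := by
    intro i
    rw [hY.eigenvalues_eq]
    simp only [sub_mulVec, dotProduct_sub, hp, hq]
    rfl
  have hsum : ∑ i, (p i + q i) = (P.trace + Q.trace).re := by
    have hPs := sum_dotProduct_eigenvectorBasis hY P
    have hQs := sum_dotProduct_eigenvectorBasis hY Q
    have : ∑ i, p i = P.trace.re := by
      rw [hp, ← Complex.re_sum]
      exact congrArg Complex.re hPs
    have hq' : ∑ i, q i = Q.trace.re := by
      rw [hq, ← Complex.re_sum]
      exact congrArg Complex.re hQs
    rw [Finset.sum_add_distrib, this, hq', Complex.add_re]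
  rw [← hsum]
  refine Finset.sum_le_sum fun i _ => ?_
  rw [heig i, abs_le]
  constructor <;> [skip; skip] <;> nlinarith [hpn i, hqn i]

/-- Hermitian matrices decompose as a difference of PSD matrices with trace sum `‖·‖₁`. -/
lemma exists_psd_decomposition {n : Type} [Fintype n] [DecidableEq n] {X : Matrix n n ℂ}
    (hX : X.IsHermitian) :
    ∃ P Q : Matrix n n ℂ, P.PosSemidef ∧ Q.PosSemidef ∧ X = P - Q ∧
      (P.trace + Q.trace).re = traceNorm X := by
  set U : Matrix n n ℂ := (hX.eigenvectorUnitary : Matrix n n ℂ) with hU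
  have hUU : star U * U = 1 := Unitary.coe_star_mul_self hX.eigenvectorUnitary
  refine ⟨U * diagonal (fun i => ((max (hX.eigenvalues i) 0 : ℝ) : ℂ)) * star U,
          U * diagonal (fun i => ((max (-hX.eigenvalues i) 0 : ℝ) : ℂ)) * star U,
          ?_, ?_, ?_, ?_⟩
  · exact (PosSemidef.diagonal fun i => by
        simpa using Complex.zero_le_real.mpr (le_max_right _ _)).mul_mul_conjTranspose_same U
  · exact (PosSemidef.diagonal fun i => by
        simpa using Complex.zero_le_real.mpr (le_max_right _ _)).mul_mul_conjTranspose_same U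
  · conv_lhs => rw [hX.spectral_theorem, Unitary.conjStarAlgAut_apply]
    rw [← Matrix.sub_mul, ← Matrix.mul_sub, diagonal_sub]
    have hfun : (RCLike.ofReal ∘ hX.eigenvalues : n → ℂ)
        = fun i => ((max (hX.eigenvalues i) 0 : ℝ) : ℂ) - ((max (-hX.eigenvalues i) 0 : ℝ) : ℂ) := by
      funext i
      show ((hX.eigenvalues i : ℝ) : ℂ)
        = ((max (hX.eigenvalues i) 0 : ℝ) : ℂ) - ((max (-hX.eigenvalues i) 0 : ℝ) : ℂ)
      rw [← Complex.ofReal_sub, max_zero_sub_max_neg_zero_eq_self]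
    rw [hfun]
  · rw [Matrix.trace_mul_cycle, hUU, Matrix.one_mul,
      Matrix.trace_mul_cycle, hUU, Matrix.one_mul,
      Matrix.trace_diagonal, Matrix.trace_diagonal, traceNorm_hermitian hX]
    rw [← Finset.sum_add_distrib]
    rw [Complex.re_sum]
    refine Finset.sum_congr rfl fun i _ => ?_
    rw [← Complex.ofReal_add, Complex.ofReal_re, max_zero_add_max_neg_zero_eq_abs_self]

/-! ### tensorId lemmas -/

lemma tensorId_sub {R A B : Type} (Φ : Matrix A A ℂ →ₗ[ℂ] Matrix B B ℂ)
    (ρ σ : Matrix (R × A) (R × A) ℂ) :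
    tensorId Φ (ρ - σ) = tensorId Φ ρ - tensorId Φ σ := by
  ext p q
  have hblk : (Matrix.of fun a a' => (ρ - σ) (p.1, a) (q.1, a'))
      = (Matrix.of fun a a' => ρ (p.1, a) (q.1, a')) - Matrix.of fun a a' => σ (p.1, a) (q.1, a') := by
    ext a a'; simp [Matrix.sub_apply]
  show Φ (Matrix.of fun a a' => (ρ - σ) (p.1, a) (q.1, a')) p.2 q.2 = _
  rw [hblk, map_sub]
  rfl

lemma tensorId_posSemidef {R A B : Type} [Fintype R] [Fintype A] [Fintype B]
    (M : Matrix A A ℂ →ₗ[ℂ] Matrix B B ℂ) (hM : IsCPTP M)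
    {P : Matrix (R × A) (R × A) ℂ} (hP : P.PosSemidef) : (tensorId M P).PosSemidef := by
  classical
  obtain ⟨e⟩ : Nonempty (R ≃ Fin (Fintype.card R)) := ⟨Fintype.equivFin R⟩
  set P' : Matrix (Fin (Fintype.card R) × A) (Fin (Fintype.card R) × A) ℂ :=
    P.submatrix (Prod.map e.symm id) (Prod.map e.symm id) with hP'def
  have hP' : P'.PosSemidef := hP.submatrix _
  have h := hM.1 _ _ hP'
  have heq : tensorId M P = (tensorId M P').submatrix (Prod.map e id) (Prod.map e id) := by
    ext p q
    simp [tensorId, hP'def, Matrix.submatrix_apply]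
  rw [heq]
  exact h.submatrix _

lemma tensorId_trace {R A B : Type} [Fintype R] [Fintype A] [Fintype B]
    (M : Matrix A A ℂ →ₗ[ℂ] Matrix B B ℂ) (hM : IsCPTP M)
    (P : Matrix (R × A) (R × A) ℂ) : (tensorId M P).trace = P.trace := by
  classical
  rw [Matrix.trace, Matrix.trace]
  rw [Fintype.sum_prod_type, Fintype.sum_prod_type]
  refine Finset.sum_congr rfl fun r _ => ?_
  have : ∑ b, (tensorId M P).diag (r, b)
      = (M (Matrix.of fun a a' => P (r, a) (r, a'))).trace := by
    rw [Matrix.trace]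
    rfl
  rw [this, hM.2, Matrix.trace]
  rfl

lemma tensorId_traceNorm_le {R A B : Type} [Fintype R] [DecidableEq R] [Fintype A]
    [DecidableEq A] [Fintype B] [DecidableEq B]
    (M : Matrix A A ℂ →ₗ[ℂ] Matrix B B ℂ) (hM : IsCPTP M)
    {X : Matrix (R × A) (R × A) ℂ} (hX : X.IsHermitian) :
    traceNorm (tensorId M X) ≤ traceNorm X := by
  obtain ⟨P, Q, hP, hQ, hXPQ, htr⟩ := exists_psd_decomposition hX
  have h1 : tensorId M X = tensorId M P - tensorId M Q := by
    rw [hXPQ, tensorId_sub]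
  rw [h1, ← htr]
  calc traceNorm (tensorId M P - tensorId M Q)
      ≤ ((tensorId M P).trace + (tensorId M Q).trace).re :=
        traceNorm_psd_sub_le (tensorId_posSemidef M hM hP) (tensorId_posSemidef M hM hQ)
    _ = (P.trace + Q.trace).re := by rw [tensorId_trace M hM, tensorId_trace M hM]

/-! ### Main theorem -/

/-- If `N = λ R_τ + (1−λ) M` with `λ ∈ [0,1]`, `τ` trace-one Hermitian, and `M` CPTP,
then for all states `ρ_{RA}, σ_{RA}` with equal marginals `ρ_R = σ_R`,
`‖(id_R ⊗ N)(ρ) − (id_R ⊗ N)(σ)‖₁ ≤ (1−λ)‖ρ − σ‖₁`. -/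
theorem stmt7 {R A B : Type} [Fintype R] [DecidableEq R] [Fintype A] [DecidableEq A]
    [Fintype B] [DecidableEq B]
    (N M : Matrix A A ℂ →ₗ[ℂ] Matrix B B ℂ) (τ : Matrix B B ℂ) (lam : ℝ)
    (hlam : lam ∈ Set.Icc (0:ℝ) 1) (hτH : τ.IsHermitian) (hτtr : τ.trace = 1)
    (hM : IsCPTP M)
    (hN : N = (lam : ℂ) • replacer A τ + ((1 - lam : ℝ) : ℂ) • M)
    (ρ σ : Matrix (R × A) (R × A) ℂ) (hρ : ρ.PosSemidef) (hσ : σ.PosSemidef)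
    (hρtr : ρ.trace = 1) (hσtr : σ.trace = 1)
    (hmarg : traceOutSnd ρ = traceOutSnd σ) :
    traceNorm (tensorId N ρ - tensorId N σ) ≤ (1 - lam) * traceNorm (ρ - σ) := by
  have hlam1 : (0:ℝ) ≤ 1 - lam := by linarith [hlam.2]
  have key : tensorId N ρ - tensorId N σ
      = ((1 - lam : ℝ) : ℂ) • tensorId M (ρ - σ) := by
    ext p q
    have hm : (Matrix.of fun a a' => ρ (p.1, a) (q.1, a')).trace
        = (Matrix.of fun a a' => σ (p.1, a) (q.1, a')).trace := by
      have := congrFun (congrFun (congrArg (fun (X : Matrix R R ℂ) => (X : R → R → ℂ)) hmarg) p.1) q.1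
      simpa [traceOutSnd, Matrix.trace, Matrix.diag] using this
    simp only [Matrix.sub_apply, tensorId, Matrix.of_apply, hN, LinearMap.add_apply,
      LinearMap.smul_apply, replacer, LinearMap.smulRight_apply, Matrix.traceLinearMap_apply,
      Matrix.add_apply, Matrix.smul_apply, smul_eq_mul]
    rw [hm]
    have hblk : (Matrix.of fun a a' => ρ (p.1, a) (q.1, a') - σ (p.1, a) (q.1, a'))
        = (Matrix.of fun a a' => ρ (p.1, a) (q.1, a'))
          - Matrix.of fun a a' => σ (p.1, a) (q.1, a') := by
      ext a a'; simp [Matrix.sub_apply]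
    rw [hblk, map_sub, Matrix.sub_apply]
    ring
  rw [key, traceNorm_real_smul hlam1]
  have hXh : (ρ - σ).IsHermitian := hρ.1.sub hσ.1
  exact mul_le_mul_of_nonneg_left (tensorId_traceNorm_le M hM hXh) hlam1
end

section
/- For a measurement channel M(ρ) = Σ_y Tr(Λ_y ρ)|y⟩⟨y| with POVM (Λ_y), the quantum Doeblin coefficient equals the sum of the minimal eigenvalues of the POVM elements: α(M) = Σ_y λ_min(Λ_y). -/
open Matrix
open scoped Kronecker ComplexOrder

private theorem kron_conjTranspose' {n m p q : Type} (A : Matrix n p ℂ) (B : Matrix m q ℂ) :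
    (A ⊗ₖ B)ᴴ = Aᴴ ⊗ₖ Bᴴ := by
  ext ⟨i, j⟩ ⟨k, l⟩
  simp [conjTranspose_apply, kroneckerMap_apply]

private theorem kron_psd' {n m : Type} [Fintype n] [Fintype m] [DecidableEq n] [DecidableEq m]
    {A : Matrix n n ℂ} {B : Matrix m m ℂ} (hA : A.PosSemidef) (hB : B.PosSemidef) :
    (A ⊗ₖ B).PosSemidef := by
  exact hA.kronecker hB

private theorem shift_psd_of_le' {d : ℕ} {A : Matrix (Fin d) (Fin d) ℂ}
    (hA : A.IsHermitian) {c : ℝ} (h : ∀ i, c ≤ hA.eigenvalues i) :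
    (A - (c : ℂ) • 1).PosSemidef := by
  set U : Matrix (Fin d) (Fin d) ℂ := (hA.eigenvectorUnitary : Matrix (Fin d) (Fin d) ℂ)
  have hU : U * star U = 1 := (Matrix.mem_unitaryGroup_iff).mp hA.eigenvectorUnitary.2
  have key : A - (c : ℂ) • 1 =
      U * diagonal (fun i => ((hA.eigenvalues i - c : ℝ) : ℂ)) * (star U) := by
    calc A - (c : ℂ) • 1
        = U * diagonal (RCLike.ofReal ∘ hA.eigenvalues) * star U - (c : ℂ) • (U * star U) := by
          rw [hU]
          conv_lhs => rw [hA.spectral_theorem, Unitary.conjStarAlgAut_apply]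
      _ = U * diagonal (RCLike.ofReal ∘ hA.eigenvalues) * star U
          - U * ((c : ℂ) • (1 : Matrix (Fin d) (Fin d) ℂ)) * star U := by
          rw [Matrix.mul_smul, mul_one, Matrix.smul_mul]
      _ = U * (diagonal (RCLike.ofReal ∘ hA.eigenvalues)
            - (c : ℂ) • (1 : Matrix (Fin d) (Fin d) ℂ)) * star U := by
          rw [Matrix.mul_sub, Matrix.sub_mul]
      _ = _ := by
          congr 1
          rw [smul_one_eq_diagonal, diagonal_sub]
          congr 1
          ext i
          push_cast
          simp [RCLike.ofReal]
  rw [key]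
  have hdg : PosSemidef (diagonal (fun i => ((hA.eigenvalues i - c : ℝ) : ℂ))) := by
    refine PosSemidef.diagonal fun i => ?_
    simp only [Pi.zero_apply]
    rw [Complex.zero_le_real]
    linarith [h i]
  have := hdg.mul_mul_conjTranspose_same U
  rwa [Matrix.star_eq_conjTranspose] at *

private theorem le_eig_of_shift_psd' {d : ℕ} {A : Matrix (Fin d) (Fin d) ℂ}
    (hA : A.IsHermitian) {c : ℝ} (h : (A - (c : ℂ) • 1).PosSemidef) (i : Fin d) :
    c ≤ hA.eigenvalues i := by
  have h2 : 0 ≤ RCLike.re (star (⇑(hA.eigenvectorBasis i)) ⬝ᵥ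
      ((A - (c : ℂ) • 1) *ᵥ ⇑(hA.eigenvectorBasis i))) :=
    h.re_dotProduct_nonneg (hA.eigenvectorBasis i)
  have hnorm : (star (⇑(hA.eigenvectorBasis i)) ⬝ᵥ ⇑(hA.eigenvectorBasis i)) = 1 := by
    have h1 : ‖hA.eigenvectorBasis i‖ = 1 := hA.eigenvectorBasis.orthonormal.1 i
    have h3 := inner_self_eq_norm_sq_to_K (𝕜 := ℂ) (hA.eigenvectorBasis i)
    rw [EuclideanSpace.inner_eq_star_dotProduct, h1] at h3
    rw [dotProduct_comm]
    simpa using h3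
  rw [sub_mulVec, dotProduct_sub, smul_mulVec, one_mulVec, dotProduct_smul,
    hnorm, smul_eq_mul, mul_one, map_sub] at h2
  have he := hA.eigenvalues_eq i
  rw [← he] at h2
  simpa using h2

private theorem stdBasis_psd' {Y : Type} [Fintype Y] [DecidableEq Y] (y : Y) :
    (Matrix.single y y (1 : ℂ)).PosSemidef := by
  have hEq : Matrix.single y y (1 : ℂ)
      = diagonal (fun y' => if y' = y then (1 : ℂ) else 0) := by
    ext a b
    simp only [single, of_apply, diagonal]
    aesop
  rw [hEq]
  refine PosSemidef.diagonal fun i => ?_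
  simp only [Pi.zero_apply]
  split_ifs <;> simp

/-- For the measurement channel with POVM `(Λ_y)`, whose Choi matrix is
`Γ = Σ_y Λ_yᵀ ⊗ |y⟩⟨y|`, the quantum Doeblin coefficient
`α(M) = sup { Tr X : X Hermitian, I ⊗ X ≤ Γ }` equals `Σ_y λ_min(Λ_y)`. -/
theorem stmt8 {d : ℕ} (hd : 0 < d) {Y : Type} [Fintype Y] [DecidableEq Y]
    (Λ : Y → Matrix (Fin d) (Fin d) ℂ)
    (hpos : ∀ y, (Λ y).PosSemidef)
    (hsum : ∑ y, Λ y = 1) :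
    sSup {t : ℝ | ∃ X : Matrix Y Y ℂ, X.IsHermitian ∧
        ((∑ y, (Λ y)ᵀ ⊗ₖ Matrix.single y y (1 : ℂ))
          - (1 : Matrix (Fin d) (Fin d) ℂ) ⊗ₖ X).PosSemidef ∧
        t = X.trace.re}
      = ∑ y, ⨅ i, (hpos y).isHermitian.eigenvalues i := by
  have hdne : Nonempty (Fin d) := ⟨⟨0, hd⟩⟩
  set μ : Y → ℝ := fun y => ⨅ i, (hpos y).isHermitian.eigenvalues i with hμ
  -- the candidate optimal X
  set X₀ : Matrix Y Y ℂ := diagonal (fun y => (μ y : ℂ)) with hX₀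
  -- membership of the RHS value
  have hmem : (∑ y, μ y) ∈ {t : ℝ | ∃ X : Matrix Y Y ℂ, X.IsHermitian ∧
      ((∑ y, (Λ y)ᵀ ⊗ₖ Matrix.single y y (1 : ℂ))
        - (1 : Matrix (Fin d) (Fin d) ℂ) ⊗ₖ X).PosSemidef ∧
      t = X.trace.re} := by
    refine ⟨X₀, ?_, ?_, ?_⟩
    · rw [IsHermitian, hX₀, diagonal_conjTranspose]
      have hstar : (star fun y => ((μ y : ℂ))) = fun y => ((μ y : ℂ)) := by
        funext y
        simp only [Pi.star_apply, Complex.star_def, Complex.conj_ofReal]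
      rw [hstar]
    · have hdecomp : (∑ y, (Λ y)ᵀ ⊗ₖ Matrix.single y y (1 : ℂ))
          - (1 : Matrix (Fin d) (Fin d) ℂ) ⊗ₖ X₀
          = ∑ y, ((Λ y)ᵀ - (μ y : ℂ) • 1) ⊗ₖ Matrix.single y y (1 : ℂ) := by
        ext ⟨i, y1⟩ ⟨j, y2⟩
        simp only [hX₀, Matrix.sub_apply, Matrix.sum_apply, kroneckerMap_apply, single,
          of_apply, one_apply, diagonal, Matrix.smul_apply, smul_eq_mul, sub_mul]
        rw [Finset.sum_sub_distrib]
        congr 1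
        rw [Finset.sum_eq_single y1]
        · by_cases h : y1 = y2 <;> by_cases h2 : i = j <;> simp [h, h2, mul_comm]
        · intro b _ hb; simp [hb]
        · intro hy; simp at hy
      rw [hdecomp]
      refine Finset.sum_induction _ _ (fun a b ha hb => ha.add hb) PosSemidef.zero ?_
      intro y _
      refine kron_psd' ?_ (stdBasis_psd' y)
      have h1 : ((Λ y) - (μ y : ℂ) • 1).PosSemidef := by
        refine shift_psd_of_le' (hpos y).isHermitian fun i => ?_
        exact ciInf_le (Set.finite_range _).bddBelow i
      have h2 := h1.transpose
      rwa [transpose_sub, transpose_smul, transpose_one] at h2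
    · rw [hX₀, trace_diagonal]
      rw [← Complex.ofReal_sum]
      simp
  -- the upper bound
  have hub : ∀ t ∈ {t : ℝ | ∃ X : Matrix Y Y ℂ, X.IsHermitian ∧
      ((∑ y, (Λ y)ᵀ ⊗ₖ Matrix.single y y (1 : ℂ))
        - (1 : Matrix (Fin d) (Fin d) ℂ) ⊗ₖ X).PosSemidef ∧
      t = X.trace.re}, t ≤ ∑ y, μ y := by
    rintro t ⟨X, hX, hM, rfl⟩
    have htr : X.trace.re = ∑ y, (X y y).re := by
      rw [Matrix.trace, Complex.re_sum]
      rfl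
    rw [htr]
    refine Finset.sum_le_sum fun y _ => ?_
    -- principal submatrix
    have hsub := hM.submatrix (fun i : Fin d => (i, y))
    have hsubeq : (((∑ y, (Λ y)ᵀ ⊗ₖ Matrix.single y y (1 : ℂ))
        - (1 : Matrix (Fin d) (Fin d) ℂ) ⊗ₖ X).submatrix
          (fun i : Fin d => (i, y)) (fun i : Fin d => (i, y)))
        = (Λ y)ᵀ - X y y • 1 := by
      ext i j
      simp only [submatrix_apply, Matrix.sub_apply, Matrix.sum_apply, kroneckerMap_apply,
        single, of_apply, one_apply, Matrix.smul_apply, smul_eq_mul]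
      rw [Finset.sum_eq_single y]
      · simp [mul_comm]
      · intro b _ hb; simp [hb]
      · intro hy; simp at hy
    rw [hsubeq] at hsub
    have hreal : X y y = ((X y y).re : ℂ) := by
      have := congrFun (congrFun hX y) y
      simp only [conjTranspose_apply] at this
      exact ((Complex.conj_eq_iff_re).mp this).symm
    rw [hreal] at hsub
    have h2 := hsub.transpose
    rw [transpose_sub, transpose_smul, transpose_one, transpose_transpose] at h2
    have h3 := fun i => le_eig_of_shift_psd' (hpos y).isHermitian h2 i
    exact le_ciInf h3
  refine le_antisymm (csSup_le ⟨_, hmem⟩ hub) (le_csSup ⟨_, hub⟩ hmem)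
end

section
/- For trace-one Hermitian τ and positive semidefinite σ and any γ ≥ 0, the hockey-stick divergence satisfies E_γ(τ‖σ) + (1−γ)₊ = 1 − sup { Tr Y : Y Hermitian, Y ≤ τ, Y ≤ γσ }. -/
open Matrix
open scoped ComplexOrder

variable {n : Type} [Fintype n] [DecidableEq n]

lemma conj_herm (U : Matrix n n ℂ) (d : n → ℝ) :
    (U * diagonal (fun i => (d i : ℂ)) * Uᴴ).IsHermitian :=
  isHermitian_mul_mul_conjTranspose U (by
    exact isHermitian_diagonal_of_self_adjoint _ (funext fun i => Complex.conj_ofReal _))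

lemma conj_psd (U : Matrix n n ℂ) {d : n → ℝ} (hd : ∀ i, 0 ≤ d i) :
    (U * diagonal (fun i => (d i : ℂ)) * Uᴴ).PosSemidef := by
  have : (diagonal (fun i => ((d i : ℂ)))).PosSemidef :=
    PosSemidef.diagonal (fun i => by simpa using hd i)
  simpa [Matrix.mul_assoc] using this.mul_mul_conjTranspose_same U

lemma conj_mul3 (U : Matrix n n ℂ) (hU : Uᴴ * U = 1) (d e : n → ℂ) :
    (U * diagonal d * Uᴴ) * (U * diagonal e * Uᴴ) = U * diagonal (d * e) * Uᴴ := by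
  have : U * diagonal d * Uᴴ * (U * diagonal e * Uᴴ)
      = U * diagonal d * (Uᴴ * U) * diagonal e * Uᴴ := by
    simp only [Matrix.mul_assoc]
  rw [this, hU, Matrix.mul_one, Matrix.mul_assoc U, diagonal_mul_diagonal]
  rfl

lemma conj_trace (U : Matrix n n ℂ) (hU : Uᴴ * U = 1) (d : n → ℂ) :
    (U * diagonal d * Uᴴ).trace = ∑ i, d i := by
  rw [trace_mul_comm, ← Matrix.mul_assoc, hU, Matrix.one_mul, trace_diagonal]

lemma psd_trace_re_nonneg {M : Matrix n n ℂ} (hM : M.PosSemidef) : 0 ≤ M.trace.re := by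
  rw [Matrix.trace]
  simp only [Complex.re_sum]
  refine Finset.sum_nonneg fun i _ => ?_
  have := hM.re_dotProduct_nonneg (Pi.single i 1)
  simpa [Matrix.diag, dotProduct, Pi.single_apply, mulVec] using this

/-- Variational formula for the hockey-stick divergence:
`E_γ(τ‖σ) + (1−γ)₊ = 1 − sup { Tr Y : Y Hermitian, Y ≤ τ, Y ≤ γσ }`, where
`E_γ(τ‖σ) = Tr[(τ − γσ)₊] − (1−γ)₊` and `Tr[(A)₊]` is the sum of `max(eigenvalue, 0)`. -/
theorem stmt10 {n : Type} [Fintype n] [DecidableEq n]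
    (τ σ : Matrix n n ℂ) (γ : ℝ) (hγ : 0 ≤ γ)
    (hτ : τ.IsHermitian) (hτtr : τ.trace = 1) (hσ : σ.PosSemidef)
    (hdiff : (τ - (γ : ℂ) • σ).IsHermitian) :
    ((∑ i, max (hdiff.eigenvalues i) 0) - max (1 - γ) 0) + max (1 - γ) 0
      = 1 - sSup {t : ℝ | ∃ Yop : Matrix n n ℂ, Yop.IsHermitian ∧
          (τ - Yop).PosSemidef ∧ ((γ : ℂ) • σ - Yop).PosSemidef ∧ t = Yop.trace.re} := by
  rw [sub_add_cancel]
  set A : Matrix n n ℂ := τ - (γ : ℂ) • σ with hAdef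
  set U : Matrix n n ℂ := (hdiff.eigenvectorUnitary : Matrix n n ℂ) with hUdef
  set e : n → ℝ := hdiff.eigenvalues with hedef
  have hUU : Uᴴ * U = 1 := by
    have := hdiff.eigenvectorUnitary.2
    rw [Matrix.mem_unitaryGroup_iff'] at this
    simpa [Matrix.star_eq_conjTranspose] using this
  have hspec : A = U * diagonal (fun i => ((e i : ℝ) : ℂ)) * Uᴴ := by
    have := hdiff.spectral_theorem
    exact this
  set Pos : Matrix n n ℂ := U * diagonal (fun i => ((max (e i) 0 : ℝ) : ℂ)) * Uᴴ with hPosdef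
  set Neg : Matrix n n ℂ := U * diagonal (fun i => ((max (-(e i)) 0 : ℝ) : ℂ)) * Uᴴ with hNegdef
  have hPos : Pos.PosSemidef := conj_psd U (fun i => le_max_right _ _)
  have hNeg : Neg.PosSemidef := conj_psd U (fun i => le_max_right _ _)
  have hsub : Pos - Neg = A := by
    rw [hPosdef, hNegdef, hspec, ← Matrix.sub_mul, ← Matrix.mul_sub, diagonal_sub]
    have hfun : (fun i => ((max (e i) 0 : ℝ) : ℂ) - ((max (-(e i)) 0 : ℝ) : ℂ))
        = fun i => ((e i : ℝ) : ℂ) := by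
      funext i
      rw [← Complex.ofReal_sub, max_zero_sub_max_neg_zero_eq_self]
    rw [hfun]
  have htrPos : Pos.trace = ((∑ i, max (e i) 0 : ℝ) : ℂ) := by
    rw [hPosdef, conj_trace U hUU, Complex.ofReal_sum]
  set P : Matrix n n ℂ := U * diagonal (fun i => ((if 0 < e i then (1:ℝ) else 0 : ℝ) : ℂ)) * Uᴴ
    with hPdef
  have hP : P.IsHermitian := conj_herm U _
  have hPP : P * P = P := by
    rw [hPdef, conj_mul3 U hUU]
    have hfun : ((fun i => ((if 0 < e i then (1:ℝ) else 0 : ℝ) : ℂ))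
        * fun i => ((if 0 < e i then (1:ℝ) else 0 : ℝ) : ℂ))
        = fun i => ((if 0 < e i then (1:ℝ) else 0 : ℝ) : ℂ) := by
      funext i
      simp only [Pi.mul_apply]
      by_cases h : 0 < e i <;> simp [h]
    rw [hfun]
  have hPAP : P * A * P = Pos := by
    rw [hspec, hPdef, conj_mul3 U hUU, conj_mul3 U hUU]
    have hfun : (((fun i => ((if 0 < e i then (1:ℝ) else 0 : ℝ) : ℂ))
        * fun i => ((e i : ℝ) : ℂ))
        * fun i => ((if 0 < e i then (1:ℝ) else 0 : ℝ) : ℂ))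
        = fun i => ((max (e i) 0 : ℝ) : ℂ) := by
      funext i
      simp only [Pi.mul_apply]
      rcases le_or_gt (e i) 0 with h | h
      · simp [not_lt.mpr h, max_eq_right h]
      · simp [h, max_eq_left h.le]
    rw [hfun]
  set Q : Matrix n n ℂ := 1 - P with hQdef
  have hQ : Q.IsHermitian := Matrix.isHermitian_one.sub hP
  have hQQ : Q * Q = Q := by
    rw [hQdef, Matrix.mul_sub, Matrix.sub_mul, Matrix.sub_mul, hPP]
    noncomm_ring
  -- the key bound
  have key : ∀ B : Matrix n n ℂ, B.PosSemidef → (B - A).PosSemidef →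
      (∑ i, max (e i) 0) ≤ B.trace.re := by
    intro B hB hBA
    have hQBQ : (Q * B * Q).PosSemidef := by
      have := hB.conjTranspose_mul_mul_same Q
      rwa [hQ.eq] at this
    have hPBAP : (P * (B - A) * P).PosSemidef := by
      have := hBA.conjTranspose_mul_mul_same P
      rwa [hP.eq] at this
    have h1 : (Q * B * Q).trace = (Q * B).trace := by
      rw [trace_mul_comm, ← Matrix.mul_assoc, hQQ]
    have h2 : (P * B * P).trace = (P * B).trace := by
      rw [trace_mul_comm, ← Matrix.mul_assoc, hPP]
    have hsplit : B.trace = (Q * B * Q).trace + (P * B * P).trace := by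
      rw [h1, h2, ← trace_add, ← Matrix.add_mul, hQdef, sub_add_cancel, Matrix.one_mul]
    have hPBP : (P * B * P).trace = (P * (B - A) * P).trace + Pos.trace := by
      rw [← hPAP, ← trace_add, Matrix.mul_sub, Matrix.sub_mul, sub_add_cancel]
    have := psd_trace_re_nonneg hQBQ
    have := psd_trace_re_nonneg hPBAP
    have hre : B.trace.re = (Q * B * Q).trace.re + ((P * (B - A) * P).trace.re
        + (∑ i, max (e i) 0)) := by
      rw [hsplit, hPBP, htrPos]
      simp
    linarith
  -- the optimal Y
  set S : Set ℝ := {t : ℝ | ∃ Yop : Matrix n n ℂ, Yop.IsHermitian ∧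
      (τ - Yop).PosSemidef ∧ ((γ : ℂ) • σ - Yop).PosSemidef ∧ t = Yop.trace.re}
  have hmem : (1 - ∑ i, max (e i) 0) ∈ S := by
    refine ⟨τ - Pos, hτ.sub hPos.1, ?_, ?_, ?_⟩
    · rwa [sub_sub_cancel]
    · have h : Pos - Neg = τ - (γ : ℂ) • σ := by rw [hsub, hAdef]
      have h5 : (γ : ℂ) • σ - (τ - Pos) = Neg := by
        calc (γ : ℂ) • σ - (τ - Pos) = Pos - (τ - (γ : ℂ) • σ) := by abel
        _ = Pos - (Pos - Neg) := by rw [h]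
        _ = Neg := by abel
      rwa [h5]
    · rw [trace_sub, hτtr, htrPos]
      simp
  have hub : ∀ t ∈ S, t ≤ 1 - ∑ i, max (e i) 0 := by
    rintro t ⟨Y, hY, hY1, hY2, rfl⟩
    have hBA : ((τ - Y) - A).PosSemidef := by
      have : (τ - Y) - A = (γ : ℂ) • σ - Y := by rw [hAdef]; abel
      rwa [this]
    have hkey := key (τ - Y) hY1 hBA
    have htr : (τ - Y).trace.re = 1 - Y.trace.re := by
      rw [trace_sub, hτtr]
      simp
    linarith [hkey, htr]
  have : sSup S = 1 - ∑ i, max (e i) 0 :=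
    IsGreatest.csSup_eq ⟨hmem, hub⟩
  rw [this]
  ring
end

section
/- Submultiplicativity of the Doeblin coefficient: for quantum channels N and M, α(N ⊗ M) ≤ α(N)·α(M), where the Choi matrix of N ⊗ M is Γ^N ⊗ Γ^M (up to a permutation of tensor factors). -/
open Matrix
open scoped Kronecker ComplexOrder

/-- Partial trace over the first tensor factor. -/
noncomputable def traceOutFst {A B : Type} [Fintype A] (M : Matrix (A × B) (A × B) ℂ) :
    Matrix B B ℂ :=
  Matrix.of fun i j => ∑ a, M (a, i) (a, j)

/-- The quantum Doeblin coefficient via the dual SDP: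
`α(N) = inf { Tr(Y Γ^N) : Y ≥ 0, Tr_A Y = I_B }`. -/
noncomputable def doeblinDual {dA dB : Type} [Fintype dA] [Fintype dB] [DecidableEq dB]
    (Γ : Matrix (dA × dB) (dA × dB) ℂ) : ℝ :=
  sInf {t : ℝ | ∃ Y : Matrix (dA × dB) (dA × dB) ℂ, Y.PosSemidef ∧
      traceOutFst Y = 1 ∧ t = ((Y * Γ).trace).re}

namespace Stmt13Aux

lemma psd_trace_nonneg {n : Type} [Fintype n] {M : Matrix n n ℂ} (hM : M.PosSemidef) :
    0 ≤ M.trace := by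
  classical
  exact Finset.sum_nonneg fun i _ => by
    simpa [dotProduct, Pi.single_apply, Finset.sum_ite_eq] using hM.dotProduct_mulVec_nonneg (Pi.single i 1)

lemma trace_mul_psd_nonneg {n : Type} [Fintype n] {Y Γ : Matrix n n ℂ}
    (hY : Y.PosSemidef) (hΓ : Γ.PosSemidef) : 0 ≤ (Y * Γ).trace := by
  obtain ⟨C, hC⟩ := (show ∃ B : Matrix _ _ ℂ, Γ = Bᴴ * B by classical open scoped MatrixOrder in exact CStarAlgebra.nonneg_iff_eq_star_mul_self.mp hΓ.nonneg)
  have : (Y * Γ).trace = (C * Y * Cᴴ).trace := by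
    rw [hC, ← Matrix.mul_assoc, Matrix.trace_mul_cycle]
  rw [this]
  exact psd_trace_nonneg (hY.mul_mul_conjTranspose_same C)

lemma trace_mul_herm_real {n : Type} [Fintype n] {Y Γ : Matrix n n ℂ}
    (hY : Y.IsHermitian) (hΓ : Γ.IsHermitian) : ((Y * Γ).trace).im = 0 := by
  have h : star ((Y * Γ).trace) = (Y * Γ).trace := by
    rw [← Matrix.trace_conjTranspose, Matrix.conjTranspose_mul, hY.eq, hΓ.eq,
      Matrix.trace_mul_comm]
  have h2 := congrArg Complex.im h
  simp only [Complex.star_def, Complex.conj_im] at h2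
  linarith

lemma mem_nonneg {dA dB : Type} [Fintype dA] [Fintype dB] [DecidableEq dB]
    {Γ : Matrix (dA × dB) (dA × dB) ℂ} (hΓ : Γ.PosSemidef) {t : ℝ}
    (ht : t ∈ {t : ℝ | ∃ Y : Matrix (dA × dB) (dA × dB) ℂ, Y.PosSemidef ∧
      traceOutFst Y = 1 ∧ t = ((Y * Γ).trace).re}) : 0 ≤ t := by
  obtain ⟨Y, hY, -, rfl⟩ := ht
  exact (Complex.le_def.mp (trace_mul_psd_nonneg hY hΓ)).1

lemma set_nonempty {dA dB : Type} [Fintype dA] [Fintype dB] [DecidableEq dB] [Nonempty dA]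
    (Γ : Matrix (dA × dB) (dA × dB) ℂ) :
    {t : ℝ | ∃ Y : Matrix (dA × dB) (dA × dB) ℂ, Y.PosSemidef ∧
      traceOutFst Y = 1 ∧ t = ((Y * Γ).trace).re}.Nonempty := by
  classical
  refine ⟨_, ((Fintype.card dA : ℂ)⁻¹ • (1 : Matrix (dA × dB) (dA × dB) ℂ)), ?_, ?_, rfl⟩
  · refine .of_dotProduct_mulVec_nonneg ?_ fun x => ?_
    · simp [Matrix.IsHermitian, Matrix.conjTranspose_smul]
    · have h1 : (0:ℂ) ≤ star x ⬝ᵥ (1 : Matrix (dA × dB) (dA × dB) ℂ) *ᵥ x := by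
        simpa using (Matrix.PosSemidef.one (n := dA × dB) (R := ℂ)).dotProduct_mulVec_nonneg x
      have h2 : (0:ℂ) ≤ (Fintype.card dA : ℂ)⁻¹ := by
        rw [Complex.le_def]
        exact ⟨by simp, by simp⟩
      calc (0:ℂ) ≤ (Fintype.card dA : ℂ)⁻¹ * (star x ⬝ᵥ (1 : Matrix (dA × dB) (dA × dB) ℂ) *ᵥ x) :=
            mul_nonneg h2 h1
        _ = star x ⬝ᵥ ((Fintype.card dA : ℂ)⁻¹ • (1 : Matrix (dA × dB) (dA × dB) ℂ)) *ᵥ x := by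
            rw [Matrix.smul_mulVec, dotProduct_smul, smul_eq_mul]
  · ext i j
    have hc : (Fintype.card dA : ℂ) ≠ 0 := by
      simpa using Fintype.card_ne_zero (α := dA)
    by_cases h : i = j <;>
      simp [traceOutFst, Matrix.one_apply, Prod.ext_iff, h, Finset.sum_ite_eq,
        inv_mul_cancel₀ hc]

end Stmt13Aux

/-- Submultiplicativity of the Doeblin coefficient: `α(N ⊗ M) ≤ α(N) α(M)`, where the Choi
matrix of `N ⊗ M` is `Γ^N ⊗ Γ^M` up to the natural permutation of tensor factors. -/
theorem stmt13 {A₁ B₁ A₂ B₂ : Type}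
    [Fintype A₁] [Fintype B₁] [Fintype A₂] [Fintype B₂]
    [DecidableEq A₁] [DecidableEq B₁] [DecidableEq A₂] [DecidableEq B₂]
    [Nonempty A₁] [Nonempty A₂]
    (Γ₁ : Matrix (A₁ × B₁) (A₁ × B₁) ℂ) (Γ₂ : Matrix (A₂ × B₂) (A₂ × B₂) ℂ)
    (h₁ : Γ₁.PosSemidef) (h₂ : Γ₂.PosSemidef)
    (hTP₁ : traceOutSnd Γ₁ = 1) (hTP₂ : traceOutSnd Γ₂ = 1) :
    doeblinDual
        (Matrix.reindex (Equiv.prodProdProdComm A₁ B₁ A₂ B₂)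
          (Equiv.prodProdProdComm A₁ B₁ A₂ B₂) (Γ₁ ⊗ₖ Γ₂))
      ≤ doeblinDual Γ₁ * doeblinDual Γ₂ := by
  classical
  set e := Equiv.prodProdProdComm A₁ B₁ A₂ B₂ with he
  set Γ := Matrix.reindex e e (Γ₁ ⊗ₖ Γ₂) with hΓdef
  set S₁ := {t : ℝ | ∃ Y : Matrix (A₁ × B₁) (A₁ × B₁) ℂ, Y.PosSemidef ∧
      traceOutFst Y = 1 ∧ t = ((Y * Γ₁).trace).re} with hS₁
  set S₂ := {t : ℝ | ∃ Y : Matrix (A₂ × B₂) (A₂ × B₂) ℂ, Y.PosSemidef ∧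
      traceOutFst Y = 1 ∧ t = ((Y * Γ₂).trace).re} with hS₂
  -- key step: products of feasible values dominate the LHS
  have key : ∀ t₁ ∈ S₁, ∀ t₂ ∈ S₂, doeblinDual Γ ≤ t₁ * t₂ := by
    rintro t₁ ⟨Y₁, hY₁, hT₁, rfl⟩ t₂ ⟨Y₂, hY₂, hT₂, rfl⟩
    have hbdd : BddBelow {t : ℝ | ∃ Y : Matrix ((A₁ × A₂) × B₁ × B₂) ((A₁ × A₂) × B₁ × B₂) ℂ,
        Y.PosSemidef ∧ traceOutFst Y = 1 ∧ t = ((Y * Γ).trace).re} := by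
      refine ⟨0, fun t ht => ?_⟩
      refine Stmt13Aux.mem_nonneg ?_ ht
      rw [hΓdef]
      have : Matrix.reindex e e (Γ₁ ⊗ₖ Γ₂) = (Γ₁ ⊗ₖ Γ₂).submatrix e.symm e.symm := rfl
      rw [this]
      obtain ⟨C₁, hC₁⟩ := (show ∃ B : Matrix _ _ ℂ, Γ₁ = Bᴴ * B by classical open scoped MatrixOrder in exact CStarAlgebra.nonneg_iff_eq_star_mul_self.mp h₁.nonneg)
      obtain ⟨C₂, hC₂⟩ := (show ∃ B : Matrix _ _ ℂ, Γ₂ = Bᴴ * B by classical open scoped MatrixOrder in exact CStarAlgebra.nonneg_iff_eq_star_mul_self.mp h₂.nonneg)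
      have hk : Γ₁ ⊗ₖ Γ₂ = (C₁ ⊗ₖ C₂)ᴴ * (C₁ ⊗ₖ C₂) := by
        have hconj : (C₁ ⊗ₖ C₂)ᴴ = C₁ᴴ ⊗ₖ C₂ᴴ := by
          ext ⟨i, j⟩ ⟨k, l⟩
          simp [Matrix.conjTranspose_apply, mul_comm]
        rw [hconj, ← Matrix.mul_kronecker_mul, ← hC₁, ← hC₂]
      exact (hk ▸ Matrix.posSemidef_conjTranspose_mul_self (C₁ ⊗ₖ C₂)).submatrix _
    refine csInf_le hbdd ?_
    refine ⟨Matrix.reindex e e (Y₁ ⊗ₖ Y₂), ?_, ?_, ?_⟩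
    · obtain ⟨C₁, hC₁⟩ := (show ∃ B : Matrix _ _ ℂ, Y₁ = Bᴴ * B by classical open scoped MatrixOrder in exact CStarAlgebra.nonneg_iff_eq_star_mul_self.mp hY₁.nonneg)
      obtain ⟨C₂, hC₂⟩ := (show ∃ B : Matrix _ _ ℂ, Y₂ = Bᴴ * B by classical open scoped MatrixOrder in exact CStarAlgebra.nonneg_iff_eq_star_mul_self.mp hY₂.nonneg)
      have hk : Y₁ ⊗ₖ Y₂ = (C₁ ⊗ₖ C₂)ᴴ * (C₁ ⊗ₖ C₂) := by
        have hconj : (C₁ ⊗ₖ C₂)ᴴ = C₁ᴴ ⊗ₖ C₂ᴴ := by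
          ext ⟨i, j⟩ ⟨k, l⟩
          simp [Matrix.conjTranspose_apply, mul_comm]
        rw [hconj, ← Matrix.mul_kronecker_mul, ← hC₁, ← hC₂]
      exact (hk ▸ Matrix.posSemidef_conjTranspose_mul_self (C₁ ⊗ₖ C₂)).submatrix _
    · ext ⟨b₁, b₂⟩ ⟨b₁', b₂'⟩
      have : (traceOutFst (Matrix.reindex e e (Y₁ ⊗ₖ Y₂))) (b₁, b₂) (b₁', b₂')
          = (traceOutFst Y₁ b₁ b₁') * (traceOutFst Y₂ b₂ b₂') := by
        simp only [traceOutFst, Matrix.of_apply, Matrix.reindex_apply, Matrix.submatrix_apply,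
          he, Equiv.prodProdProdComm, Equiv.coe_fn_symm_mk, Matrix.kroneckerMap_apply]
        rw [Fintype.sum_prod_type, Finset.sum_comm]
        rw [Finset.sum_mul_sum]
        exact Finset.sum_comm
      rw [this, hT₁, hT₂]
      by_cases hb1 : b₁ = b₁' <;> by_cases hb2 : b₂ = b₂' <;>
        simp [Matrix.one_apply, Prod.ext_iff, hb1, hb2]
    · have htr : ((Matrix.reindex e e (Y₁ ⊗ₖ Y₂) * Γ).trace)
          = ((Y₁ * Γ₁).trace) * ((Y₂ * Γ₂).trace) := by
        rw [hΓdef]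
        have : (Matrix.reindex e e (Y₁ ⊗ₖ Y₂)) * (Matrix.reindex e e (Γ₁ ⊗ₖ Γ₂))
            = Matrix.reindex e e ((Y₁ ⊗ₖ Y₂) * (Γ₁ ⊗ₖ Γ₂)) := by
          simp [Matrix.reindex_apply, Matrix.submatrix_mul_equiv]
        rw [this]
        have htrs : ∀ (M : Matrix ((A₁ × B₁) × A₂ × B₂) ((A₁ × B₁) × A₂ × B₂) ℂ),
            (Matrix.reindex e e M).trace = M.trace := by
          intro M
          simp only [Matrix.reindex_apply, Matrix.trace, Matrix.diag, Matrix.submatrix_apply]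
          exact e.symm.sum_comp fun i => M i i
        rw [htrs, ← Matrix.mul_kronecker_mul, Matrix.trace_kronecker]
      rw [htr, Complex.mul_re, Stmt13Aux.trace_mul_herm_real hY₁.1 h₁.1]
      ring
  -- combine
  have hne₁ := Stmt13Aux.set_nonempty Γ₁
  have hne₂ := Stmt13Aux.set_nonempty Γ₂
  have hnn₁ : ∀ t ∈ S₁, (0:ℝ) ≤ t := fun t ht => Stmt13Aux.mem_nonneg h₁ ht
  have hnn₂ : ∀ t ∈ S₂, (0:ℝ) ≤ t := fun t ht => Stmt13Aux.mem_nonneg h₂ ht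
  have hinf₂ : 0 ≤ sInf S₂ := le_csInf hne₂ hnn₂
  have hinf₁ : 0 ≤ sInf S₁ := le_csInf hne₁ hnn₁
  have step1 : ∀ t₁ ∈ S₁, doeblinDual Γ ≤ t₁ * sInf S₂ := by
    intro t₁ ht₁
    rcases eq_or_lt_of_le (hnn₁ t₁ ht₁) with h0 | hpos
    · obtain ⟨t₂, ht₂⟩ := hne₂
      have := key t₁ ht₁ t₂ ht₂
      rw [← h0] at this ⊢
      simpa using this
    · rw [← div_le_iff₀' hpos] at *
      refine le_csInf hne₂ fun t₂ ht₂ => ?_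
      rw [div_le_iff₀' hpos]
      exact key t₁ ht₁ t₂ ht₂
  have : doeblinDual Γ ≤ sInf S₁ * sInf S₂ := by
    rcases eq_or_lt_of_le hinf₂ with h0 | hpos
    · obtain ⟨t₁, ht₁⟩ := hne₁
      have := step1 t₁ ht₁
      rw [← h0] at this ⊢
      simpa using this
    · rw [mul_comm, ← div_le_iff₀' hpos]
      refine le_csInf hne₁ fun t₁ ht₁ => ?_
      rw [div_le_iff₀' hpos, mul_comm]
      exact step1 t₁ ht₁
  exact this
end

section
/- If X₁, X₂ ≥ 0 are positive semidefinite with I ⊗ X₁ ≤ Γ₁ and I ⊗ X₂ ≤ Γ₂ (where Γ₁, Γ₂ are positive semidefinite Choi matrices of channels), then (I ⊗ I) ⊗ (X₁ ⊗ X₂) ≤ Γ₁ ⊗ Γ₂ (after the natural reordering of tensor factors). Consequently, if α(N₁) and α(N₂) are each attained by positive semidefinite optimizers, then α(N₁ ⊗ N₂) = α(N₁)·α(N₂). -/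
open Matrix
open scoped Kronecker ComplexOrder

/-- The quantum Doeblin coefficient, defined via the Choi-matrix SDP. -/
noncomputable def doeblin {dA dB : Type} [Fintype dA] [Fintype dB] [DecidableEq dA]
    (Γ : Matrix (dA × dB) (dA × dB) ℂ) : ℝ :=
  sSup {t : ℝ | ∃ X : Matrix dB dB ℂ, X.IsHermitian ∧
      (Γ - (1 : Matrix dA dA ℂ) ⊗ₖ X).PosSemidef ∧ t = X.trace.re}

set_option linter.unusedSectionVars false

namespace DoeblinAux

/-! ### Generic facts about positive semidefinite matrices -/

lemma kron_conjT {m n : Type} [Fintype m] [Fintype n] (A : Matrix m m ℂ) (B : Matrix n n ℂ) :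
    (A ⊗ₖ B)ᴴ = Aᴴ ⊗ₖ Bᴴ := by
  ext ⟨i, j⟩ ⟨k, l⟩
  simp [conjTranspose_apply, kroneckerMap_apply]

lemma psd_kron {m n : Type} [Fintype m] [Fintype n]
    {A : Matrix m m ℂ} {B : Matrix n n ℂ} (hA : A.PosSemidef) (hB : B.PosSemidef) :
    (A ⊗ₖ B).PosSemidef := by
  exact hA.kronecker hB

lemma psd_smul {n : Type} [Fintype n] {M : Matrix n n ℂ} (hM : M.PosSemidef)
    {c : ℝ} (hc : 0 ≤ c) : (((c : ℂ)) • M).PosSemidef := by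
  refine posSemidef_iff_dotProduct_mulVec.mpr ⟨?_, ?_⟩
  · have : star (c : ℂ) = (c : ℂ) := by simp [Complex.star_def, Complex.conj_ofReal]
    rw [IsHermitian, conjTranspose_smul, this, hM.1]
  · intro x
    rw [smul_mulVec, dotProduct_smul, smul_eq_mul]
    exact mul_nonneg (Complex.zero_le_real.mpr hc) (hM.dotProduct_mulVec_nonneg x)

lemma herm_trace_im {n : Type} [Fintype n] {M : Matrix n n ℂ} (hM : M.IsHermitian) :
    M.trace.im = 0 := by
  have h : star M.trace = M.trace := by rw [← trace_conjTranspose, hM]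
  have := congrArg Complex.im h
  simp [Complex.star_def] at this
  linarith

lemma psd_diag_re {n : Type} [Fintype n] [DecidableEq n] {M : Matrix n n ℂ}
    (hM : M.PosSemidef) (d : n) : 0 ≤ (M d d).re := by
  have h := hM.re_dotProduct_nonneg (Pi.single d 1)
  simpa [dotProduct, mulVec, Pi.single_apply, Finset.sum_ite_eq] using h

lemma psd_trace_re_nonneg {n : Type} [Fintype n] [DecidableEq n] {M : Matrix n n ℂ}
    (hM : M.PosSemidef) : 0 ≤ M.trace.re := by
  have : M.trace.re = ∑ i, (M i i).re := by simp [Matrix.trace, Matrix.diag, Complex.re_sum]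
  rw [this]
  exact Finset.sum_nonneg fun i _ => psd_diag_re hM i

/-! ### The feasible set of the Doeblin SDP -/

def dset {dA dB : Type} [Fintype dA] [Fintype dB] [DecidableEq dA]
    (Γ : Matrix (dA × dB) (dA × dB) ℂ) : Set ℝ :=
  {t : ℝ | ∃ X : Matrix dB dB ℂ, X.IsHermitian ∧
      (Γ - (1 : Matrix dA dA ℂ) ⊗ₖ X).PosSemidef ∧ t = X.trace.re}

lemma doeblin_eq {dA dB : Type} [Fintype dA] [Fintype dB] [DecidableEq dA]
    (Γ : Matrix (dA × dB) (dA × dB) ℂ) : doeblin Γ = sSup (dset Γ) := rfl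

lemma zero_mem_dset {dA dB : Type} [Fintype dA] [Fintype dB] [DecidableEq dA] [DecidableEq dB]
    {Γ : Matrix (dA × dB) (dA × dB) ℂ} (hΓ : Γ.PosSemidef) : (0 : ℝ) ∈ dset Γ := by
  refine ⟨0, isHermitian_zero, ?_, by simp⟩
  simpa [Matrix.kronecker_zero] using hΓ

lemma dset_bdd {dA dB : Type} [Fintype dA] [Fintype dB] [DecidableEq dA] [DecidableEq dB]
    [Nonempty dA] (Γ : Matrix (dA × dB) (dA × dB) ℂ) : BddAbove (dset Γ) := by
  obtain ⟨a₀⟩ := (inferInstance : Nonempty dA)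
  refine ⟨∑ b, (Γ (a₀, b) (a₀, b)).re, ?_⟩
  rintro t ⟨X, hX, hfeas, rfl⟩
  have hdiag : ∀ b, (X b b).re ≤ (Γ (a₀, b) (a₀, b)).re := by
    intro b
    have h := psd_diag_re hfeas (a₀, b)
    simp only [Matrix.sub_apply, kroneckerMap_apply, one_apply_eq, one_mul, Complex.sub_re] at h
    linarith
  have : X.trace.re = ∑ b, (X b b).re := by
    simp [Matrix.trace, Matrix.diag, Complex.re_sum]
  rw [this]
  exact Finset.sum_le_sum fun b _ => hdiag b

lemma doeblin_nonneg {dA dB : Type} [Fintype dA] [Fintype dB] [DecidableEq dA] [DecidableEq dB]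
    [Nonempty dA] {Γ : Matrix (dA × dB) (dA × dB) ℂ} (hΓ : Γ.PosSemidef) : 0 ≤ doeblin Γ := by
  rw [doeblin_eq]
  exact le_csSup (dset_bdd Γ) (zero_mem_dset hΓ)

/-- The key feasibility/optimality estimate: if `c • Γ - 1 ⊗ Y ⪰ 0` with `c ≥ 0` then
`tr Y ≤ c · doeblin Γ`. -/
lemma key {dA dB : Type} [Fintype dA] [Fintype dB] [DecidableEq dA] [DecidableEq dB]
    [Nonempty dA] (Γ : Matrix (dA × dB) (dA × dB) ℂ) {c : ℝ} (hc : 0 ≤ c)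
    {Y : Matrix dB dB ℂ} (hY : Y.IsHermitian)
    (h : (((c : ℂ)) • Γ - (1 : Matrix dA dA ℂ) ⊗ₖ Y).PosSemidef) :
    Y.trace.re ≤ c * doeblin Γ := by
  rcases eq_or_lt_of_le hc with hc0 | hc0
  · have h' : (-((1 : Matrix dA dA ℂ) ⊗ₖ Y)).PosSemidef := by
      simpa [← hc0] using h
    have htr := psd_trace_re_nonneg h'
    have : (-((1 : Matrix dA dA ℂ) ⊗ₖ Y)).trace = -((Fintype.card dA : ℂ) * Y.trace) := by
      simp [Matrix.trace_kronecker]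
    rw [this] at htr
    simp only [Complex.neg_re, Complex.mul_re, Complex.natCast_re, Complex.natCast_im] at htr
    have hcard : (0 : ℝ) < Fintype.card dA := by exact_mod_cast Fintype.card_pos
    have hYtr : Y.trace.re ≤ 0 := by nlinarith
    rw [← hc0]; linarith
  · have hcne : (c : ℂ) ≠ 0 := by exact_mod_cast ne_of_gt hc0
    set Y' : Matrix dB dB ℂ := ((c : ℂ))⁻¹ • Y with hY'
    have hY'herm : Y'.IsHermitian := by
      have hstar : star ((c : ℂ))⁻¹ = ((c : ℂ))⁻¹ := by
        simp [Complex.star_def, ← Complex.ofReal_inv, Complex.conj_ofReal]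
      rw [IsHermitian, hY', conjTranspose_smul, hstar, hY]
    have hfeas : (Γ - (1 : Matrix dA dA ℂ) ⊗ₖ Y').PosSemidef := by
      have heq : Γ - (1 : Matrix dA dA ℂ) ⊗ₖ Y'
          = ((c : ℂ))⁻¹ • (((c : ℂ)) • Γ - (1 : Matrix dA dA ℂ) ⊗ₖ Y) := by
        rw [smul_sub, smul_smul, inv_mul_cancel₀ hcne, one_smul, hY', Matrix.kronecker_smul]
      rw [heq]
      have := psd_smul h (le_of_lt (inv_pos.mpr hc0))
      simpa [Complex.ofReal_inv] using this
    have hle : Y'.trace.re ≤ doeblin Γ := by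
      rw [doeblin_eq]
      exact le_csSup (dset_bdd Γ) ⟨Y', hY'herm, hfeas, rfl⟩
    have htr : Y'.trace.re = c⁻¹ * Y.trace.re := by
      rw [hY', Matrix.trace_smul]
      simp [Complex.ofReal_inv]
    rw [htr] at hle
    calc Y.trace.re = c * (c⁻¹ * Y.trace.re) := by field_simp
      _ ≤ c * doeblin Γ := mul_le_mul_of_nonneg_left hle hc

/-! ### Contraction of the first tensor factor against a vector -/

noncomputable def contr {ι κ : Type} [Fintype ι] [Fintype κ] (u : ι → ℂ)
    (M : Matrix (ι × κ) (ι × κ) ℂ) : Matrix κ κ ℂ :=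
  Matrix.of fun p q => ∑ r, ∑ s, (starRingEnd ℂ) (u r) * u s * M (r, p) (s, q)

noncomputable def pick {ι κ : Type} [Fintype κ] [DecidableEq κ] (u : ι → ℂ) :
    Matrix (ι × κ) κ ℂ :=
  Matrix.of fun rp q => u rp.1 * (if rp.2 = q then 1 else 0)

lemma contr_eq {ι κ : Type} [Fintype ι] [Fintype κ] [DecidableEq κ] (u : ι → ℂ)
    (M : Matrix (ι × κ) (ι × κ) ℂ) : contr u M = (pick (κ := κ) u)ᴴ * M * (pick (κ := κ) u) := by
  ext p q
  simp only [contr, pick, of_apply, mul_apply, conjTranspose_apply,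
    Fintype.sum_prod_type, star_mul', mul_ite, ite_mul, mul_zero, zero_mul, mul_one, one_mul,
    apply_ite (starRingEnd ℂ), map_zero, _root_.map_one, Finset.sum_ite_eq, Finset.sum_ite_eq',
    Finset.mem_univ, if_true, Complex.star_def, Finset.sum_mul, Finset.mul_sum]
  rw [Finset.sum_comm]
  refine Finset.sum_congr rfl fun r _ => Finset.sum_congr rfl fun s _ => by ring

lemma contr_psd {ι κ : Type} [Fintype ι] [Fintype κ] [DecidableEq κ] (u : ι → ℂ)
    {M : Matrix (ι × κ) (ι × κ) ℂ} (hM : M.PosSemidef) : (contr u M).PosSemidef := by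
  rw [contr_eq]
  exact hM.conjTranspose_mul_mul_same _

lemma contr_sub {ι κ : Type} [Fintype ι] [Fintype κ] (u : ι → ℂ)
    (M N : Matrix (ι × κ) (ι × κ) ℂ) : contr u (M - N) = contr u M - contr u N := by
  ext p q
  simp [contr, mul_sub, Finset.sum_sub_distrib]

lemma contr_kron {ι κ : Type} [Fintype ι] [Fintype κ] (u : ι → ℂ)
    (P : Matrix ι ι ℂ) (Q : Matrix κ κ ℂ) :
    contr u (P ⊗ₖ Q) = (star u ⬝ᵥ P *ᵥ u) • Q := by
  ext p q
  simp only [contr, of_apply, kroneckerMap_apply, Matrix.smul_apply, smul_eq_mul, dotProduct, mulVec,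
    Pi.star_apply, Complex.star_def, Finset.sum_mul, Finset.mul_sum]
  refine Finset.sum_congr rfl fun r _ => Finset.sum_congr rfl fun s _ => by ring

section CX
variable {A₁ B₁ A₂ B₂ : Type} [Fintype A₁] [Fintype B₁] [Fintype A₂] [Fintype B₂]
  [DecidableEq A₁] [DecidableEq B₁] [DecidableEq A₂] [DecidableEq B₂]

noncomputable def contrX (u : A₁ × B₁ → ℂ) (X : Matrix (B₁ × B₂) (B₁ × B₂) ℂ) :
    Matrix B₂ B₂ ℂ :=
  ∑ a₁ : A₁, contr (fun b₁ => u (a₁, b₁)) X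

lemma contrX_herm (u : A₁ × B₁ → ℂ) {X : Matrix (B₁ × B₂) (B₁ × B₂) ℂ}
    (hX : X.IsHermitian) : (contrX u X).IsHermitian := by
  unfold contrX
  rw [IsHermitian, conjTranspose_sum]
  refine Finset.sum_congr rfl fun a₁ _ => ?_
  rw [contr_eq]
  exact isHermitian_conjTranspose_mul_mul _ hX

lemma contrX_apply (u : A₁ × B₁ → ℂ) (X : Matrix (B₁ × B₂) (B₁ × B₂) ℂ) (b₂ b₂' : B₂) :
    contrX u X b₂ b₂'
      = ∑ a₁, ∑ b₁, ∑ b₁', (starRingEnd ℂ) (u (a₁, b₁)) * u (a₁, b₁')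
          * X (b₁, b₂) (b₁', b₂') := by
  simp [contrX, contr, Matrix.sum_apply]

lemma trace_contrX (u : A₁ × B₁ → ℂ) (X : Matrix (B₁ × B₂) (B₁ × B₂) ℂ) :
    (contrX u X).trace
      = star u ⬝ᵥ ((1 : Matrix A₁ A₁ ℂ) ⊗ₖ traceOutSnd X) *ᵥ u := by
  trans (∑ a₁, ∑ b₁, ∑ b₁', ∑ b₂, (starRingEnd ℂ) (u (a₁, b₁)) * u (a₁, b₁')
      * X (b₁, b₂) (b₁', b₂))
  · simp only [Matrix.trace, Matrix.diag, contrX_apply]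
    rw [Finset.sum_comm]
    refine Finset.sum_congr rfl fun a₁ _ => ?_
    rw [Finset.sum_comm]
    refine Finset.sum_congr rfl fun b₁ _ => ?_
    rw [Finset.sum_comm]
  · simp only [dotProduct, mulVec, Pi.star_apply, kroneckerMap_apply, one_apply, traceOutSnd,
      of_apply, Fintype.sum_prod_type, ite_mul, zero_mul, mul_ite, mul_zero,
      Finset.sum_ite_irrel, Finset.sum_const_zero, Finset.sum_ite_eq, Finset.sum_ite_eq',
      Finset.mem_univ, if_true, Finset.mul_sum, Finset.sum_mul]
    refine Finset.sum_congr rfl fun a₁ _ => Finset.sum_congr rfl fun b₁ _ =>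
      Finset.sum_congr rfl fun b₁' _ => Finset.sum_congr rfl fun b₂ _ => by
        simp only [← Complex.star_def]
        ring

lemma contr_big (u : A₁ × B₁ → ℂ) (X : Matrix (B₁ × B₂) (B₁ × B₂) ℂ) :
    contr u ((((1 : Matrix A₁ A₁ ℂ) ⊗ₖ (1 : Matrix A₂ A₂ ℂ)) ⊗ₖ X).submatrix
        (Equiv.prodProdProdComm A₁ B₁ A₂ B₂) (Equiv.prodProdProdComm A₁ B₁ A₂ B₂))
      = (1 : Matrix A₂ A₂ ℂ) ⊗ₖ contrX u X := by
  ext ⟨a₂, b₂⟩ ⟨a₂', b₂'⟩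
  rcases eq_or_ne a₂ a₂' with h | h
  · subst h
    simp only [contr, of_apply, submatrix_apply, Equiv.prodProdProdComm_apply,
      kroneckerMap_apply, one_apply_eq, contrX_apply, Fintype.sum_prod_type, one_apply,
      mul_ite, ite_mul, mul_zero, zero_mul, mul_one, one_mul,
      Finset.sum_ite_irrel, Finset.sum_const_zero,
      Finset.sum_ite_eq, Finset.sum_ite_eq', Finset.mem_univ, if_true]
    try refine Finset.sum_congr rfl fun a₁ _ => Finset.sum_congr rfl fun b₁ _ =>
      Finset.sum_congr rfl fun b₁' _ => by ring
  · simp [contr, one_apply_ne h, one_apply, h, Fintype.sum_prod_type]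

lemma traceOutSnd_herm {X : Matrix (B₁ × B₂) (B₁ × B₂) ℂ} (hX : X.IsHermitian) :
    (traceOutSnd X).IsHermitian := by
  ext i j
  simp only [conjTranspose_apply, traceOutSnd, of_apply, star_sum]
  refine Finset.sum_congr rfl fun b _ => ?_
  have := congrFun (congrFun hX (i, b)) (j, b)
  simpa [conjTranspose_apply] using this

lemma trace_traceOutSnd {X : Matrix (B₁ × B₂) (B₁ × B₂) ℂ} :
    (traceOutSnd X).trace = X.trace := by
  simp [traceOutSnd, Matrix.trace, Matrix.diag, Fintype.sum_prod_type]

end CX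
end DoeblinAux

open DoeblinAux in
/-- (i) If `X₁, X₂ ≥ 0` are feasible, `I ⊗ X₁ ≤ Γ₁` and `I ⊗ X₂ ≤ Γ₂`, then after the
natural reordering of tensor factors `I ⊗ (X₁ ⊗ X₂) ≤ Γ₁ ⊗ Γ₂`.  (ii) Consequently, if
`α(N₁)` and `α(N₂)` are each attained by positive semidefinite optimizers, then
`α(N₁ ⊗ N₂) = α(N₁) α(N₂)`. -/
theorem stmt14 {A₁ B₁ A₂ B₂ : Type}
    [Fintype A₁] [Fintype B₁] [Fintype A₂] [Fintype B₂]
    [DecidableEq A₁] [DecidableEq B₁] [DecidableEq A₂] [DecidableEq B₂]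
    [Nonempty A₁] [Nonempty A₂]
    (Γ₁ : Matrix (A₁ × B₁) (A₁ × B₁) ℂ) (Γ₂ : Matrix (A₂ × B₂) (A₂ × B₂) ℂ)
    (h₁ : Γ₁.PosSemidef) (h₂ : Γ₂.PosSemidef)
    (hTP₁ : traceOutSnd Γ₁ = 1) (hTP₂ : traceOutSnd Γ₂ = 1) :
    (∀ X₁ : Matrix B₁ B₁ ℂ, ∀ X₂ : Matrix B₂ B₂ ℂ,
      X₁.PosSemidef → X₂.PosSemidef →
      (Γ₁ - (1 : Matrix A₁ A₁ ℂ) ⊗ₖ X₁).PosSemidef →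
      (Γ₂ - (1 : Matrix A₂ A₂ ℂ) ⊗ₖ X₂).PosSemidef →
      ((Matrix.reindex (Equiv.prodProdProdComm A₁ B₁ A₂ B₂)
            (Equiv.prodProdProdComm A₁ B₁ A₂ B₂) (Γ₁ ⊗ₖ Γ₂))
        - (1 : Matrix (A₁ × A₂) (A₁ × A₂) ℂ) ⊗ₖ (X₁ ⊗ₖ X₂)).PosSemidef) ∧
    ((∃ X₁ : Matrix B₁ B₁ ℂ, X₁.PosSemidef ∧
        (Γ₁ - (1 : Matrix A₁ A₁ ℂ) ⊗ₖ X₁).PosSemidef ∧ X₁.trace.re = doeblin Γ₁) →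
     (∃ X₂ : Matrix B₂ B₂ ℂ, X₂.PosSemidef ∧
        (Γ₂ - (1 : Matrix A₂ A₂ ℂ) ⊗ₖ X₂).PosSemidef ∧ X₂.trace.re = doeblin Γ₂) →
      doeblin (Matrix.reindex (Equiv.prodProdProdComm A₁ B₁ A₂ B₂)
          (Equiv.prodProdProdComm A₁ B₁ A₂ B₂) (Γ₁ ⊗ₖ Γ₂))
        = doeblin Γ₁ * doeblin Γ₂) := by
  set e := Equiv.prodProdProdComm A₁ B₁ A₂ B₂ with he
  -- Part (i)
  have part1 : ∀ X₁ : Matrix B₁ B₁ ℂ, ∀ X₂ : Matrix B₂ B₂ ℂ,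
      X₁.PosSemidef → X₂.PosSemidef →
      (Γ₁ - (1 : Matrix A₁ A₁ ℂ) ⊗ₖ X₁).PosSemidef →
      (Γ₂ - (1 : Matrix A₂ A₂ ℂ) ⊗ₖ X₂).PosSemidef →
      ((Matrix.reindex e e (Γ₁ ⊗ₖ Γ₂))
        - (1 : Matrix (A₁ × A₂) (A₁ × A₂) ℂ) ⊗ₖ (X₁ ⊗ₖ X₂)).PosSemidef := by
    intro X₁ X₂ hX₁ hX₂ hf₁ hf₂
    have hsplit : (Matrix.reindex e e (Γ₁ ⊗ₖ Γ₂))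
        - (1 : Matrix (A₁ × A₂) (A₁ × A₂) ℂ) ⊗ₖ (X₁ ⊗ₖ X₂)
        = ((Γ₁ - (1 : Matrix A₁ A₁ ℂ) ⊗ₖ X₁) ⊗ₖ Γ₂
            + ((1 : Matrix A₁ A₁ ℂ) ⊗ₖ X₁) ⊗ₖ (Γ₂ - (1 : Matrix A₂ A₂ ℂ) ⊗ₖ X₂)).submatrix
          e.symm e.symm := by
      ext ⟨⟨a₁, a₂⟩, ⟨b₁, b₂⟩⟩ ⟨⟨a₁', a₂'⟩, ⟨b₁', b₂'⟩⟩
      simp only [reindex_apply, submatrix_apply, Matrix.sub_apply, Matrix.add_apply, kroneckerMap_apply,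
        one_apply, he, Equiv.prodProdProdComm_symm, Equiv.prodProdProdComm_apply,
        Prod.mk.injEq]
      by_cases hA : a₁ = a₁' <;> by_cases hB : a₂ = a₂' <;> simp [hA, hB] <;> ring
    rw [hsplit]
    refine Matrix.PosSemidef.submatrix ?_ _
    exact ((psd_kron hf₁ h₂).add (psd_kron (psd_kron Matrix.PosSemidef.one hX₁) hf₂))
  refine ⟨part1, ?_⟩
  rintro ⟨X₁, hX₁, hf₁, hv₁⟩ ⟨X₂, hX₂, hf₂, hv₂⟩
  set G := Matrix.reindex e e (Γ₁ ⊗ₖ Γ₂) with hG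
  have hGpsd : G.PosSemidef := by
    rw [hG, reindex_apply]
    exact (psd_kron h₁ h₂).submatrix _
  have hα₂ : (0 : ℝ) ≤ doeblin Γ₂ := doeblin_nonneg h₂
  -- Upper bound
  have hupper : ∀ t ∈ dset G, t ≤ doeblin Γ₁ * doeblin Γ₂ := by
    rintro t ⟨X, hX, hfeas, rfl⟩
    have h11 : ((1 : Matrix A₁ A₁ ℂ) ⊗ₖ (1 : Matrix A₂ A₂ ℂ))
        = (1 : Matrix (A₁ × A₂) (A₁ × A₂) ℂ) := Matrix.one_kronecker_one
    have hMeq : (G - (1 : Matrix (A₁ × A₂) (A₁ × A₂) ℂ) ⊗ₖ X).submatrix e e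
        = Γ₁ ⊗ₖ Γ₂ - (((1 : Matrix A₁ A₁ ℂ) ⊗ₖ (1 : Matrix A₂ A₂ ℂ)) ⊗ₖ X).submatrix e e := by
      ext x y
      simp [hG, h11, reindex_apply, submatrix_apply, Matrix.sub_apply]
    have hM : (Γ₁ ⊗ₖ Γ₂
        - (((1 : Matrix A₁ A₁ ℂ) ⊗ₖ (1 : Matrix A₂ A₂ ℂ)) ⊗ₖ X).submatrix e e).PosSemidef := by
      rw [← hMeq]
      exact hfeas.submatrix _
    -- for every vector u on A₁ × B₁ we get an estimate on the contracted matrix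
    have hkey : ∀ u : A₁ × B₁ → ℂ,
        (contrX u X).trace.re ≤ (star u ⬝ᵥ Γ₁ *ᵥ u).re * doeblin Γ₂ := by
      intro u
      set c : ℝ := (star u ⬝ᵥ Γ₁ *ᵥ u).re with hcdef
      have hc : 0 ≤ c := h₁.re_dotProduct_nonneg u
      have hreal : star u ⬝ᵥ Γ₁ *ᵥ u = (c : ℂ) := by
        have h0 := h₁.dotProduct_mulVec_nonneg u
        rw [Complex.le_def] at h0
        apply Complex.ext
        · simp [hcdef]
        · simp [← h0.2]
      have hcontr : contr u (Γ₁ ⊗ₖ Γ₂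
          - (((1 : Matrix A₁ A₁ ℂ) ⊗ₖ (1 : Matrix A₂ A₂ ℂ)) ⊗ₖ X).submatrix e e)
          = (c : ℂ) • Γ₂ - (1 : Matrix A₂ A₂ ℂ) ⊗ₖ contrX u X := by
        rw [contr_sub, contr_kron, hreal, he, contr_big]
      have hpsd : ((c : ℂ) • Γ₂ - (1 : Matrix A₂ A₂ ℂ) ⊗ₖ contrX u X).PosSemidef := by
        rw [← hcontr]
        exact contr_psd u hM
      have := key Γ₂ hc (contrX_herm u hX) hpsd
      linarith [this, le_of_eq (mul_comm c (doeblin Γ₂))]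
    -- assemble the operator inequality `doeblin Γ₂ • Γ₁ ⪰ 1 ⊗ traceOutSnd X`
    have hZ : (((doeblin Γ₂ : ℝ) : ℂ) • Γ₁
        - (1 : Matrix A₁ A₁ ℂ) ⊗ₖ traceOutSnd X).PosSemidef := by
      refine posSemidef_iff_dotProduct_mulVec.mpr ⟨?_, ?_⟩
      · have hs : star ((doeblin Γ₂ : ℝ) : ℂ) = ((doeblin Γ₂ : ℝ) : ℂ) := by
          simp [Complex.star_def, Complex.conj_ofReal]
        refine Matrix.IsHermitian.sub ?_ ?_
        · rw [IsHermitian, conjTranspose_smul, hs, h₁.1]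
        · rw [IsHermitian, kron_conjT, conjTranspose_one, traceOutSnd_herm hX]
      · intro u
        have hqf : star u ⬝ᵥ (((doeblin Γ₂ : ℝ) : ℂ) • Γ₁
            - (1 : Matrix A₁ A₁ ℂ) ⊗ₖ traceOutSnd X) *ᵥ u
            = ((doeblin Γ₂ : ℝ) : ℂ) * (star u ⬝ᵥ Γ₁ *ᵥ u) - (contrX u X).trace := by
          rw [sub_mulVec, dotProduct_sub, smul_mulVec, dotProduct_smul, smul_eq_mul,
            trace_contrX]
        rw [hqf]
        have him : (star u ⬝ᵥ Γ₁ *ᵥ u).im = 0 := by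
          have h0 := h₁.dotProduct_mulVec_nonneg u
          rw [Complex.le_def] at h0
          simpa using h0.2.symm
        have htim : (contrX u X).trace.im = 0 := herm_trace_im (contrX_herm u hX)
        rw [Complex.le_def]
        constructor
        · have := hkey u
          simp only [Complex.sub_re, Complex.mul_re, Complex.ofReal_re, Complex.ofReal_im,
            Complex.zero_re, him]
          nlinarith
        · simp [Complex.mul_im, him, htim]
    have hfinal := key Γ₁ hα₂ (traceOutSnd_herm hX) hZ
    rw [trace_traceOutSnd] at hfinal
    calc X.trace.re ≤ doeblin Γ₂ * doeblin Γ₁ := hfinal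
      _ = doeblin Γ₁ * doeblin Γ₂ := mul_comm _ _
  -- Lower bound witness
  have hmem : doeblin Γ₁ * doeblin Γ₂ ∈ dset G := by
    refine ⟨X₁ ⊗ₖ X₂, (psd_kron hX₁ hX₂).1, part1 X₁ X₂ hX₁ hX₂ hf₁ hf₂, ?_⟩
    have ht₁ : X₁.trace = ((doeblin Γ₁ : ℝ) : ℂ) := by
      apply Complex.ext
      · simpa using hv₁
      · simpa using herm_trace_im hX₁.1
    have ht₂ : X₂.trace = ((doeblin Γ₂ : ℝ) : ℂ) := by
      apply Complex.ext
      · simpa using hv₂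
      · simpa using herm_trace_im hX₂.1
    rw [Matrix.trace_kronecker, ht₁, ht₂, ← Complex.ofReal_mul]
    simp
  rw [doeblin_eq]
  exact le_antisymm (csSup_le ⟨0, zero_mem_dset hGpsd⟩ hupper) (le_csSup (dset_bdd G) hmem)
end

section
/- For the generalized amplitude damping channel N_{p,η} (with parameters p ∈ [0,1], η ∈ [0,1]), the quantum Doeblin coefficient equals (1 − √η)², independent of p. -/
open Matrix
open scoped Kronecker ComplexOrder

/-- The Kraus operators of the generalized amplitude damping channel `N_{p,η}`. -/
noncomputable def gadKraus (p η : ℝ) : Fin 4 → Matrix (Fin 2) (Fin 2) ℂ :=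
  ![(Real.sqrt p : ℂ) • !![1, 0; 0, (Real.sqrt η : ℂ)],
    (Real.sqrt p : ℂ) • !![0, (Real.sqrt (1 - η) : ℂ); 0, 0],
    (Real.sqrt (1 - p) : ℂ) • !![(Real.sqrt η : ℂ), 0; 0, 1],
    (Real.sqrt (1 - p) : ℂ) • !![0, 0; (Real.sqrt (1 - η) : ℂ), 0]]

/-- The generalized amplitude damping channel applied to a matrix. -/
noncomputable def gadApply (p η : ℝ) (ρ : Matrix (Fin 2) (Fin 2) ℂ) :
    Matrix (Fin 2) (Fin 2) ℂ :=
  ∑ k : Fin 4, gadKraus p η k * ρ * (gadKraus p η k)ᴴ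

/-- The Choi matrix of the generalized amplitude damping channel. -/
noncomputable def gadChoi (p η : ℝ) : Matrix (Fin 2 × Fin 2) (Fin 2 × Fin 2) ℂ :=
  ∑ i : Fin 2, ∑ j : Fin 2,
    Matrix.single i j (1 : ℂ) ⊗ₖ gadApply p η (Matrix.single i j (1 : ℂ))

/-- Explicit entries of the Choi matrix of the GAD channel. -/
noncomputable def gadG (p η : ℝ) : Fin 2 → Fin 2 → Fin 2 → Fin 2 → ℂ :=
  ![![![![((p + (1-p)*η : ℝ) : ℂ), 0], ![0, ((Real.sqrt η : ℝ) : ℂ)]],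
     ![![0, (((1-p)*(1-η) : ℝ) : ℂ)], ![0, 0]]],
    ![![![0, 0], ![((p*(1-η) : ℝ) : ℂ), 0]],
     ![![((Real.sqrt η : ℝ) : ℂ), 0], ![0, ((p*η + (1-p) : ℝ) : ℂ)]]]]

set_option maxHeartbeats 2000000 in
lemma gadChoi_eq (p η : ℝ) (hp0 : 0 ≤ p) (hp1 : p ≤ 1) (hη0 : 0 ≤ η) (hη1 : η ≤ 1) :
    gadChoi p η = Matrix.of fun x y => gadG p η x.1 x.2 y.1 y.2 := by
  have h1 : (Real.sqrt p : ℂ) ^ 2 = p := by norm_cast; rw [Real.sq_sqrt hp0]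
  have h2 : (Real.sqrt η : ℂ) ^ 2 = η := by norm_cast; rw [Real.sq_sqrt hη0]
  have h3 : (Real.sqrt (1-p) : ℂ) ^ 2 = 1 - (p:ℂ) := by
    norm_cast; rw [Real.sq_sqrt (by linarith)]
  have h4 : (Real.sqrt (1-η) : ℂ) ^ 2 = 1 - (η:ℂ) := by
    norm_cast; rw [Real.sq_sqrt (by linarith)]
  ext ⟨i, k⟩ ⟨j, l⟩
  fin_cases i <;> fin_cases k <;> fin_cases j <;> fin_cases l <;>
    simp [gadChoi, gadApply, gadKraus, gadG, Matrix.mul_apply, Fin.sum_univ_succ,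
      Fin.sum_univ_two, Matrix.kroneckerMap_apply, Matrix.single,
      Matrix.conjTranspose_apply, Matrix.vecHead, Matrix.vecTail, Matrix.vecMul,
      dotProduct] <;>
    push_cast <;> ring_nf <;> simp [h1, h2, h3, h4] <;> ring_nf

set_option maxHeartbeats 2000000 in
/-- The quantum Doeblin coefficient of the generalized amplitude damping channel `N_{p,η}`
equals `(1 − √η)²`, independently of `p`. -/
theorem stmt15 (p η : ℝ) (hp : p ∈ Set.Icc (0:ℝ) 1) (hη : η ∈ Set.Icc (0:ℝ) 1) :
    doeblin (gadChoi p η) = (1 - Real.sqrt η) ^ 2 := by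
  obtain ⟨hp0, hp1⟩ := hp
  obtain ⟨hη0, hη1⟩ := hη
  set s := Real.sqrt η with hs
  have hs0 : 0 ≤ s := Real.sqrt_nonneg η
  have hss : s * s = η := Real.mul_self_sqrt hη0
  have hsη : η ≤ s := by nlinarith [Real.sq_sqrt hη0, Real.sqrt_le_sqrt hη1, Real.sqrt_one]
  have hΓ := gadChoi_eq p η hp0 hp1 hη0 hη1
  -- the optimal primal variable
  set X : Matrix (Fin 2) (Fin 2) ℂ :=
    Matrix.diagonal ![((p + (1-p)*η - s : ℝ) : ℂ), ((p*η + (1-p) - s : ℝ) : ℂ)] with hX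
  -- the square root of the slack matrix
  set c : ℝ := Real.sqrt s with hc
  set d : ℝ := Real.sqrt (s - η) with hd
  have hcc : (c : ℂ) * c = s := by norm_cast; exact Real.mul_self_sqrt hs0
  have hdd : (d : ℂ) * d = (s : ℂ) - η := by
    norm_cast; exact Real.mul_self_sqrt (by linarith)
  set Bf : Fin 2 → Fin 2 → Fin 2 → Fin 2 → ℂ :=
    ![![![![(c : ℂ), 0], ![0, (c : ℂ)]], ![![0, (d : ℂ)], ![0, 0]]],
      ![![![0, 0], ![(d : ℂ), 0]], ![![0, 0], ![0, 0]]]] with hBf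
  set B : Matrix (Fin 2 × Fin 2) (Fin 2 × Fin 2) ℂ :=
    Matrix.of fun x y => Bf x.1 x.2 y.1 y.2 with hB
  have hslack : gadChoi p η - (1 : Matrix (Fin 2) (Fin 2) ℂ) ⊗ₖ X = Bᴴ * B := by
    rw [hΓ]
    ext ⟨i, k⟩ ⟨j, l⟩
    fin_cases i <;> fin_cases k <;> fin_cases j <;> fin_cases l <;>
      simp [gadG, hB, hBf, hX, Matrix.mul_apply, Fintype.sum_prod_type, Fin.sum_univ_two,
        Matrix.kroneckerMap_apply, Matrix.one_apply, Matrix.conjTranspose_apply,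
        Matrix.diagonal, Matrix.vecHead, Matrix.vecTail] <;>
      push_cast <;> (try simp only [← hs])
    all_goals (try simp only [pow_two, hcc, hdd])
    all_goals ring
  have hXh : X.IsHermitian := by
    rw [hX]
    ext i j
    fin_cases i <;> fin_cases j <;>
      simp [Matrix.conjTranspose_apply, Matrix.diagonal, Complex.star_def,
        Complex.conj_ofReal]
  have hpsd : (gadChoi p η - (1 : Matrix (Fin 2) (Fin 2) ℂ) ⊗ₖ X).PosSemidef := by
    rw [hslack]; exact Matrix.posSemidef_conjTranspose_mul_self B
  have htr : X.trace.re = (1 - s)^2 := by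
    simp [hX, Matrix.trace, Matrix.diag, Fin.sum_univ_two, Matrix.diagonal]
    linear_combination -hss
  have hmem : (1 - s)^2 ∈ {t : ℝ | ∃ Y : Matrix (Fin 2) (Fin 2) ℂ, Y.IsHermitian ∧
      (gadChoi p η - (1 : Matrix (Fin 2) (Fin 2) ℂ) ⊗ₖ Y).PosSemidef ∧ t = Y.trace.re} :=
    ⟨X, hXh, hpsd, htr.symm⟩
  have hub : ∀ t ∈ {t : ℝ | ∃ Y : Matrix (Fin 2) (Fin 2) ℂ, Y.IsHermitian ∧
      (gadChoi p η - (1 : Matrix (Fin 2) (Fin 2) ℂ) ⊗ₖ Y).PosSemidef ∧ t = Y.trace.re},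
      t ≤ (1 - s)^2 := by
    rintro t ⟨Y, hY, hYpsd, rfl⟩
    set v : Fin 2 × Fin 2 → ℂ :=
      fun x => if x = ((0:Fin 2),(0:Fin 2)) then 1 else if x = (1,1) then -1 else 0 with hv
    have h0 := hYpsd.dotProduct_mulVec_nonneg v
    rw [hΓ] at h0
    simp [hv, dotProduct, Matrix.mulVec, Fintype.sum_prod_type, Fin.sum_univ_two,
      Matrix.sub_apply, Matrix.kroneckerMap_apply, Matrix.one_apply, gadG,
      Prod.ext_iff] at h0
    have h1 := (Complex.le_def.mp h0).1
    simp [Complex.add_re, Complex.sub_re, Complex.ofReal_re] at h1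
    simp [Matrix.trace, Matrix.diag, Fin.sum_univ_two]
    nlinarith [hss, h1]
  rw [doeblin]
  exact le_antisymm (csSup_le ⟨_, hmem⟩ hub) (le_csSup ⟨(1 - s)^2, hub⟩ hmem)
end
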